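/- arXiv:2507.15415 — 3 statements merged into one kernel-verified Lean document; each statement's English description precedes it below -/
import Mathlib

section
/- Every permutation of a finite set can be written as a composition of two permutations, each of which is an involution (i.e., a product of disjoint transpositions). -/
open Equiv Equiv.Perm

private theorem key_cycle {α : Type*} [Fintype α] [DecidableEq α]
    {σ : Equiv.Perm α} (hσ : σ.IsCycle) :
    ∃ a b : Equiv.Perm α, a * a = 1 ∧ b * b = 1 ∧ σ = a * b ∧
      a.support ⊆ σ.support ∧ b.support ⊆ σ.support := by
  classical
  set G := Subgroup.zpowers σ
  set e : G ≃ σ.support := hσ.zpowersEquivSupport with he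
  set s : G := ⟨σ, Subgroup.mem_zpowers σ⟩ with hs
  have hcomm : ∀ g : G, s * g = g * s := by
    rintro ⟨g, m, rfl⟩
    ext1
    push_cast
    exact (Commute.zpow_right (Commute.refl σ) m).eq
  -- involution 1 : inversion
  have hinv1 : Function.Involutive (fun g : G => g⁻¹) := fun g => inv_inv g
  -- involution 2 : g ↦ g⁻¹ * s⁻¹
  have hinv2 : Function.Involutive (fun g : G => g⁻¹ * s⁻¹) := by
    intro g
    simp only [mul_inv_rev, inv_inv]
    rw [hcomm, mul_assoc, mul_inv_cancel, mul_one]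
  set f1 : Equiv.Perm G := hinv1.toPerm _
  set f2 : Equiv.Perm G := hinv2.toPerm _
  set asub : Equiv.Perm {x // x ∈ σ.support} :=
    (e.symm.trans f1).trans e
  set bsub : Equiv.Perm {x // x ∈ σ.support} :=
    (e.symm.trans f2).trans e
  have hcoe : ∀ g : G, ((e g : α)) = (g : Equiv.Perm α) (Classical.choose hσ) := fun g => rfl
  refine ⟨Equiv.Perm.ofSubtype asub, Equiv.Perm.ofSubtype bsub, ?_, ?_, ?_, ?_, ?_⟩
  · rw [← map_mul, ← map_one (Equiv.Perm.ofSubtype (p := (· ∈ σ.support)))]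
    congr 1
    ext y
    simp [asub, f1, Function.Involutive.coe_toPerm]
  · rw [← map_mul, ← map_one (Equiv.Perm.ofSubtype (p := (· ∈ σ.support)))]
    congr 1
    ext y
    simp only [bsub, Equiv.Perm.mul_apply, Equiv.trans_apply, Equiv.symm_apply_apply,
      Function.Involutive.coe_toPerm, f2, Equiv.Perm.one_apply]
    rw [show ((e.symm y)⁻¹ * s⁻¹)⁻¹ * s⁻¹ = e.symm y from hinv2 _]
    simp
  · have h1 : ∀ x, σ x ∈ σ.support ↔ x ∈ σ.support := fun x =>
      (Equiv.Perm.apply_mem_support (f := σ) (x := x))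
    have : Equiv.Perm.ofSubtype (σ.subtypePerm h1) = σ :=
      Equiv.Perm.ofSubtype_subtypePerm h1 (fun x hx => Equiv.Perm.mem_support.2 hx)
    conv_lhs => rw [← this]
    rw [← map_mul]
    congr 1
    ext y
    simp only [Equiv.Perm.mul_apply, Equiv.trans_apply, Function.Involutive.coe_toPerm,
      Equiv.Perm.subtypePerm_apply, asub, bsub, f1, f2]
    simp only [Equiv.symm_apply_apply, mul_inv_rev, inv_inv]
    rw [hcoe]
    have : ((s * e.symm y : G) : Equiv.Perm α) (Classical.choose hσ)
        = σ (((e.symm y : G) : Equiv.Perm α) (Classical.choose hσ)) := rfl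
    rw [this, ← hcoe, Equiv.apply_symm_apply]
  · intro x hx
    rw [Equiv.Perm.mem_support] at hx
    by_contra hmem
    exact hx (Equiv.Perm.ofSubtype_apply_of_not_mem asub hmem)
  · intro x hx
    rw [Equiv.Perm.mem_support] at hx
    by_contra hmem
    exact hx (Equiv.Perm.ofSubtype_apply_of_not_mem bsub hmem)

private theorem key_aux {α : Type*} [Fintype α] [DecidableEq α]
    (σ : Equiv.Perm α) :
    ∃ a b : Equiv.Perm α, a * a = 1 ∧ b * b = 1 ∧ σ = a * b ∧
      a.support ⊆ σ.support ∧ b.support ⊆ σ.support := by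
  induction σ using Equiv.Perm.cycle_induction_on with
  | base_one => exact ⟨1, 1, by simp, by simp, by simp, by simp, by simp⟩
  | base_cycles σ hσ => exact key_cycle hσ
  | induction_disjoint σ τ hd hc ih1 ih2 =>
    obtain ⟨a, b, ha, hb, hab, hsa, hsb⟩ := ih1
    obtain ⟨c, d, hc2, hd2, hcd, hsc, hsd⟩ := ih2
    have hds := Equiv.Perm.disjoint_iff_disjoint_support.mp hd
    have dac : Equiv.Perm.Disjoint a c := Equiv.Perm.disjoint_iff_disjoint_support.mpr
      (Finset.disjoint_of_subset_left hsa (Finset.disjoint_of_subset_right hsc hds))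
    have dbc : Equiv.Perm.Disjoint b c := Equiv.Perm.disjoint_iff_disjoint_support.mpr
      (Finset.disjoint_of_subset_left hsb (Finset.disjoint_of_subset_right hsc hds))
    have dbd : Equiv.Perm.Disjoint b d := Equiv.Perm.disjoint_iff_disjoint_support.mpr
      (Finset.disjoint_of_subset_left hsb (Finset.disjoint_of_subset_right hsd hds))
    refine ⟨a * c, b * d, ?_, ?_, ?_, ?_, ?_⟩
    · calc a * c * (a * c) = a * a * (c * c) := by
            rw [mul_assoc, mul_assoc, ← mul_assoc c a c, dac.commute.eq.symm, mul_assoc]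
      _ = 1 := by rw [ha, hc2, one_mul]
    · calc b * d * (b * d) = b * b * (d * d) := by
            rw [mul_assoc, mul_assoc, ← mul_assoc d b d, dbd.commute.eq.symm, mul_assoc]
      _ = 1 := by rw [hb, hd2, one_mul]
    · rw [hab, hcd]
      rw [mul_assoc, ← mul_assoc b c d, dbc.commute.eq, mul_assoc, mul_assoc]
    · calc (a * c).support ⊆ a.support ∪ c.support := Equiv.Perm.support_mul_le a c
        _ ⊆ σ.support ∪ τ.support := Finset.union_subset_union hsa hsc
        _ = (σ * τ).support := (hd.support_mul).symm
    · calc (b * d).support ⊆ b.support ∪ d.support := Equiv.Perm.support_mul_le b d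
        _ ⊆ σ.support ∪ τ.support := Finset.union_subset_union hsb hsd
        _ = (σ * τ).support := (hd.support_mul).symm

/-- Every permutation of a finite set is a composition of two involutions
(products of disjoint transpositions). -/
theorem perm_eq_comp_two_involutions {α : Type*} [Fintype α] [DecidableEq α]
    (σ : Equiv.Perm α) :
    ∃ a b : Equiv.Perm α, a * a = 1 ∧ b * b = 1 ∧ σ = a * b := by
  obtain ⟨a, b, ha, hb, hab, _, _⟩ := key_aux σ
  exact ⟨a, b, ha, hb, hab⟩
end

section
/- Let D(n) denote the set of sizes reachable from n by repeatedly applying m ↦ ⌈m/2⌉ or m ↦ ⌊m/2⌋ until reaching a value ≤ 1. Then the cardinality of D(n) is at most 2·(⌈log₂ n⌉ + 1). -/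
/-- One halving step: from a size a > 1 we may go to ⌈a/2⌉ or ⌊a/2⌋. -/
def halveStep (a b : ℕ) : Prop :=
  1 < a ∧ (b = (a + 1) / 2 ∨ b = a / 2)

lemma reach_bound (n m : ℕ) (h : Relation.ReflTransGen halveStep n m) :
    ∃ k, k ≤ Nat.clog 2 n ∧ n / 2 ^ k ≤ m ∧ m ≤ (n + 2 ^ k - 1) / 2 ^ k := by
  induction h with
  | refl => exact ⟨0, by simp⟩
  | @tail b c hb hstep ih =>
    obtain ⟨k, hk, hlo, hhi⟩ := ih
    obtain ⟨hb1, hc⟩ := hstep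
    -- n ≥ 2^k + 1
    have hn2 : 2 ^ k < n := by
      by_contra hcon
      push_neg at hcon
      have h2 : 0 < 2 ^ k := Nat.pow_pos (by norm_num)
      have : (n + 2 ^ k - 1) / 2 ^ k < 2 := by
        rw [Nat.div_lt_iff_lt_mul h2]; omega
      omega
    have hn1 : 1 ≤ n := le_trans (Nat.one_le_two_pow) hn2.le
    have hceil : ∀ j, (n + 2 ^ j - 1) / 2 ^ j = (n - 1) / 2 ^ j + 1 := by
      intro j
      have h2 : 0 < 2 ^ j := Nat.pow_pos (by norm_num)
      rw [show n + 2 ^ j - 1 = (n - 1) + 1 * 2 ^ j by omega,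
        Nat.add_mul_div_right _ _ h2]
    refine ⟨k + 1, ?_, ?_, ?_⟩
    · have := (Nat.lt_clog_iff_pow_lt (b := 2) (by norm_num)).mpr hn2
      omega
    · -- lower bound: c ≥ b/2 ≥ (n/2^k)/2 = n/2^(k+1)
      have h1 : n / 2 ^ (k + 1) = n / 2 ^ k / 2 := by
        rw [pow_succ, Nat.div_div_eq_div_mul]
      have h2 : n / 2 ^ k / 2 ≤ b / 2 := Nat.div_le_div_right hlo
      have h3 : b / 2 ≤ c := by omega
      omega
    · -- upper bound
      have h1 : (n + 2 ^ (k + 1) - 1) / 2 ^ (k + 1) = (n - 1) / 2 ^ k / 2 + 1 := by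
        rw [hceil, pow_succ, Nat.div_div_eq_div_mul]
      have h2 : c ≤ (b + 1) / 2 := by omega
      have h3 : b ≤ (n - 1) / 2 ^ k + 1 := by rw [hceil] at hhi; omega
      have h4 : (b + 1) / 2 ≤ ((n - 1) / 2 ^ k + 2) / 2 := Nat.div_le_div_right (by omega)
      have h5 : ((n - 1) / 2 ^ k + 2) / 2 = (n - 1) / 2 ^ k / 2 + 1 := by omega
      omega

/-- The set of sizes reachable from n by repeated halving has cardinality at
most 2·(⌈log₂ n⌉ + 1). -/
theorem reachable_sizes_card_le (n : ℕ) :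
    {m : ℕ | Relation.ReflTransGen halveStep n m}.ncard ≤
      2 * (Nat.clog 2 n + 1) := by
  set L := Nat.clog 2 n with hL
  set S : Finset ℕ :=
    (Finset.range (L + 1)).biUnion (fun k => {n / 2 ^ k, (n + 2 ^ k - 1) / 2 ^ k}) with hS
  have hsub : {m : ℕ | Relation.ReflTransGen halveStep n m} ⊆ ↑S := by
    intro m hm
    obtain ⟨k, hk, hlo, hhi⟩ := reach_bound n m hm
    simp only [hS, Finset.coe_biUnion, Finset.mem_coe, Finset.mem_range, Set.mem_iUnion]
    refine ⟨k, by omega, ?_⟩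
    have : m = n / 2 ^ k ∨ m = (n + 2 ^ k - 1) / 2 ^ k := by
      have hd : (n + 2 ^ k - 1) / 2 ^ k ≤ n / 2 ^ k + 1 := by
        have h2 : 0 < 2 ^ k := Nat.pow_pos (by norm_num)
        calc (n + 2 ^ k - 1) / 2 ^ k ≤ (n + 2 ^ k) / 2 ^ k := Nat.div_le_div_right (by omega)
          _ = n / 2 ^ k + 1 := by rw [Nat.add_div_right _ h2]
      omega
    simp only [Finset.mem_insert, Finset.mem_singleton]
    tauto
  calc {m : ℕ | Relation.ReflTransGen halveStep n m}.ncard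
      ≤ S.card := by
        have := Set.ncard_le_ncard hsub S.finite_toSet
        simpa [Set.ncard_coe_finset] using this
    _ ≤ ∑ _k ∈ Finset.range (L + 1), 2 := by
        apply le_trans (Finset.card_biUnion_le)
        apply Finset.sum_le_sum
        intro k _
        apply le_trans (Finset.card_insert_le _ _)
        simp
    _ = 2 * (L + 1) := by simp [Finset.sum_const, mul_comm]
end

section
/- For each recursion level k ≥ 0, the set of sizes reachable from n by exactly k applications of m ↦ ⌈m/2⌉ or m ↦ ⌊m/2⌋ has cardinality at most 2; specifically, all such sizes lie in {⌊n/2^k⌋, ⌈n/2^k⌉}. -/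
lemma halve_mem (a n m : ℕ) (ha : 0 < a)
    (hm : m = n / a ∨ m = (n + a - 1) / a) :
    (m / 2 = n / (2 * a) ∨ m / 2 = (n + 2 * a - 1) / (2 * a)) ∧
    ((m + 1) / 2 = n / (2 * a) ∨ (m + 1) / 2 = (n + 2 * a - 1) / (2 * a)) := by
  set q := n / (2 * a) with hq
  set r := n % (2 * a) with hrdef
  have hr : r < 2 * a := Nat.mod_lt _ (by omega)
  have hn : n = 2 * a * q + r := by
    rw [hq, hrdef]; exact (Nat.div_add_mod n (2 * a)).symm
  have hfa : n / a = 2 * q + r / a := by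
    have hrw : n = a * (2 * q) + r := by rw [hn]; ring
    rw [hrw, Nat.mul_add_div ha]
  have hca : (n + a - 1) / a = 2 * q + (r + a - 1) / a := by
    have hrw : n + a - 1 = a * (2 * q) + (r + a - 1) := by
      rw [hn]
      have : 2 * a * q = a * (2 * q) := by ring
      rw [this]
      generalize a * (2 * q) = t
      omega
    rw [hrw, Nat.mul_add_div ha]
  have hc2 : (n + 2 * a - 1) / (2 * a) = q + (r + 2 * a - 1) / (2 * a) := by
    have hrw : n + 2 * a - 1 = 2 * a * q + (r + 2 * a - 1) := by
      rw [hn]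
      generalize 2 * a * q = t
      omega
    rw [hrw, Nat.mul_add_div (by omega)]
  set e := r / a with hedef
  set d := (r + a - 1) / a with hddef
  set c := (r + 2 * a - 1) / (2 * a) with hcdef
  have he1 : e ≤ 1 := by
    have : r / a < 2 := (Nat.div_lt_iff_lt_mul ha).mpr (by omega)
    omega
  have he2 : 1 ≤ e ↔ a ≤ r := by
    rw [hedef]; exact Nat.one_le_div_iff ha
  have hd1 : d ≤ 2 := by
    have : (r + a - 1) / a < 3 := (Nat.div_lt_iff_lt_mul ha).mpr (by omega)
    omega
  have hd2 : 1 ≤ d ↔ a ≤ r + a - 1 := by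
    rw [hddef]; exact Nat.one_le_div_iff ha
  have hd3 : 2 ≤ d ↔ 2 * a ≤ r + a - 1 := by
    rw [hddef, Nat.le_div_iff_mul_le ha]
  have hc1 : c ≤ 1 := by
    have : (r + 2 * a - 1) / (2 * a) < 2 :=
      (Nat.div_lt_iff_lt_mul (by omega)).mpr (by omega)
    omega
  have hc2' : 1 ≤ c ↔ 2 * a ≤ r + 2 * a - 1 := by
    rw [hcdef]; exact Nat.one_le_div_iff (by omega)
  have hq2 : n / (2 * a) = q := hq.symm
  clear_value q r e d c
  rcases hm with hm | hm <;> subst hm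
  · rw [hfa, hc2]; constructor <;> omega
  · rw [hca, hc2]; constructor <;> omega

lemma halving_key (n : ℕ) : ∀ k (seq : ℕ → ℕ), seq 0 = n →
    (∀ i < k, seq (i + 1) = (seq i + 1) / 2 ∨ seq (i + 1) = seq i / 2) →
    seq k = n / 2 ^ k ∨ seq k = (n + 2 ^ k - 1) / 2 ^ k := by
  intro k
  induction k with
  | zero => intro seq h0 _; left; simpa using h0
  | succ k ih =>
    intro seq h0 hstep
    have hk := ih seq h0 (fun i hi => hstep i (by omega))
    have hmem := halve_mem (2 ^ k) n (seq k) (Nat.pow_pos (by norm_num)) hk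
    have hpow : 2 * 2 ^ k = 2 ^ (k + 1) := by ring
    rw [hpow] at hmem
    rcases hstep k (by omega) with h | h <;> rw [h]
    · exact hmem.2
    · exact hmem.1

/-- After exactly k halving steps (each taking the ceiling or the floor), the
reachable sizes from n all lie in {⌊n/2^k⌋, ⌈n/2^k⌉}; in particular there are
at most 2 of them. -/
theorem halving_level_sizes (n k : ℕ) :
    (∀ seq : ℕ → ℕ, seq 0 = n →
      (∀ i < k, seq (i + 1) = (seq i + 1) / 2 ∨ seq (i + 1) = seq i / 2) →
      seq k = n / 2 ^ k ∨ seq k = (n + 2 ^ k - 1) / 2 ^ k) ∧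
    {m : ℕ | ∃ seq : ℕ → ℕ, seq 0 = n ∧
      (∀ i < k, seq (i + 1) = (seq i + 1) / 2 ∨ seq (i + 1) = seq i / 2) ∧
      seq k = m}.ncard ≤ 2 := by
  constructor
  · exact fun seq h0 hs => halving_key n k seq h0 hs
  · have hsub : {m : ℕ | ∃ seq : ℕ → ℕ, seq 0 = n ∧
        (∀ i < k, seq (i + 1) = (seq i + 1) / 2 ∨ seq (i + 1) = seq i / 2) ∧
        seq k = m} ⊆ ({n / 2 ^ k, (n + 2 ^ k - 1) / 2 ^ k} : Set ℕ) := by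
      rintro m ⟨seq, h0, hs, hk⟩
      simp only [Set.mem_insert_iff, Set.mem_singleton_iff]
      rcases halving_key n k seq h0 hs with h | h
      · left; omega
      · right; omega
    calc _ ≤ ({n / 2 ^ k, (n + 2 ^ k - 1) / 2 ^ k} : Set ℕ).ncard :=
            Set.ncard_le_ncard hsub (Set.toFinite _)
      _ ≤ 2 := by
            apply (Set.ncard_insert_le _ _).trans
            simp
end
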